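/- Let f be a smooth positive function of (x,z) and u a smooth positive function of x on an open subset of ℝ², and let κ ∈ ℝ. Then the Gaussian curvature of the two-dimensional metric (f⁴/u²) dx² + (f²/u²) dz² equals κ at every point if and only if f and u satisfy the differential equation 2·∂²f/∂z² − ∂²(1/f)/∂x² − ∂/∂x((∂(ln u)/∂x)/f) = −κ·f³/u² at every point. -/

import Mathlib

open scoped ContDiff

/-- The Gaussian curvature of the two-dimensional metric `E(x,z) dx² + G(x,z) dz²`:
`K = −(1/(2√(EG))) ( ∂/∂x( (∂G/∂x)/√(EG) ) + ∂/∂z( (∂E/∂z)/√(EG) ) )`. -/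
noncomputable def gaussCurv (E G : ℝ → ℝ → ℝ) (x z : ℝ) : ℝ :=
  -(1 / (2 * Real.sqrt (E x z * G x z))) *
    (deriv (fun x' => deriv (fun x'' => G x'' z) x' / Real.sqrt (E x' z * G x' z)) x
      + deriv (fun z' => deriv (fun z'' => E x z'') z' / Real.sqrt (E x z' * G x z')) z)

lemma hasDerivAt_px {G : ℝ × ℝ → ℝ} (hG : ContDiff ℝ ∞ G) (x z : ℝ) :
    HasDerivAt (fun x' => G (x', z)) (fderiv ℝ G (x, z) (1, 0)) x := by
  have h1 : HasDerivAt (fun x' : ℝ => (x', z)) ((1:ℝ), (0:ℝ)) x :=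
    (hasDerivAt_id x).prodMk (hasDerivAt_const x z)
  exact ((hG.differentiable (by simp) (x, z)).hasFDerivAt).comp_hasDerivAt x h1

lemma hasDerivAt_pz {G : ℝ × ℝ → ℝ} (hG : ContDiff ℝ ∞ G) (x z : ℝ) :
    HasDerivAt (fun z' => G (x, z')) (fderiv ℝ G (x, z) (0, 1)) z := by
  have h1 : HasDerivAt (fun z' : ℝ => (x, z')) ((0:ℝ), (1:ℝ)) z :=
    (hasDerivAt_const z x).prodMk (hasDerivAt_id z)
  exact ((hG.differentiable (by simp) (x, z)).hasFDerivAt).comp_hasDerivAt z h1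

lemma contDiff_pv {G : ℝ × ℝ → ℝ} (hG : ContDiff ℝ ∞ G) (v : ℝ × ℝ) :
    ContDiff ℝ ∞ (fun p => fderiv ℝ G p v) :=
  (hG.fderiv_right (by simp)).clm_apply contDiff_const

lemma aux_iff (A B L κ : ℝ) (hA : 0 < A) (hB : 0 < B) :
    (-(B ^ 2 / A ^ 3) * L = κ ↔ L = -κ * A ^ 3 / B ^ 2) := by
  have hA' := hA.ne'
  have hB' := hB.ne'
  constructor
  · intro h; rw [← h]; field_simp
  · intro h; rw [h]; field_simp

theorem stmt3 (Ω : Set (ℝ × ℝ)) (hΩ : IsOpen Ω)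
    (f : ℝ → ℝ → ℝ) (u : ℝ → ℝ)
    (hf : ContDiff ℝ ∞ (fun p : ℝ × ℝ => f p.1 p.2)) (hu : ContDiff ℝ ∞ u)
    (hfpos : ∀ x z, 0 < f x z) (hupos : ∀ x, 0 < u x) (κ : ℝ) :
    (∀ p ∈ Ω,
      gaussCurv (fun x z => (f x z) ^ 4 / (u x) ^ 2) (fun x z => (f x z) ^ 2 / (u x) ^ 2)
        p.1 p.2 = κ) ↔
    (∀ p ∈ Ω,
      2 * deriv (deriv (f p.1)) p.2
        - deriv (deriv fun x => (f x p.2)⁻¹) p.1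
        - deriv (fun x => deriv (fun x' => Real.log (u x')) x / f x p.2) p.1
      = -κ * (f p.1 p.2) ^ 3 / (u p.1) ^ 2) := by
  set F : ℝ × ℝ → ℝ := fun p => f p.1 p.2 with hF
  set p1 : ℝ × ℝ → ℝ := fun p => fderiv ℝ F p (1, 0) with hp1
  set p2 : ℝ × ℝ → ℝ := fun p => fderiv ℝ F p (0, 1) with hp2
  have hp1s : ContDiff ℝ ∞ p1 := contDiff_pv hf _
  have hp2s : ContDiff ℝ ∞ p2 := contDiff_pv hf _
  have hd1 : ∀ x z : ℝ, HasDerivAt (fun x' => f x' z) (p1 (x, z)) x :=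
    fun x z => hasDerivAt_px hf x z
  have hd2 : ∀ x z : ℝ, HasDerivAt (fun z' => f x z') (p2 (x, z)) z :=
    fun x z => hasDerivAt_pz hf x z
  have hd11 : ∀ x z : ℝ, HasDerivAt (fun x' => p1 (x', z)) (fderiv ℝ p1 (x, z) (1, 0)) x :=
    fun x z => hasDerivAt_px hp1s x z
  have hd22 : ∀ x z : ℝ, HasDerivAt (fun z' => p2 (x, z')) (fderiv ℝ p2 (x, z) (0, 1)) z :=
    fun x z => hasDerivAt_pz hp2s x z
  have hu1 : ∀ x : ℝ, HasDerivAt u (deriv u x) x :=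
    fun x => (hu.differentiable (by simp) x).hasDerivAt
  have hus : ContDiff ℝ ∞ (deriv u) := (contDiff_infty_iff_deriv.mp hu).2
  have hu2 : ∀ x : ℝ, HasDerivAt (deriv u) (deriv (deriv u) x) x :=
    fun x => (hus.differentiable (by simp) x).hasDerivAt
  have hsq : ∀ x z : ℝ, Real.sqrt (f x z ^ 4 / u x ^ 2 * (f x z ^ 2 / u x ^ 2))
      = f x z ^ 3 / u x ^ 2 := by
    intro x z
    rw [show f x z ^ 4 / u x ^ 2 * (f x z ^ 2 / u x ^ 2) = (f x z ^ 3 / u x ^ 2) ^ 2 by ring]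
    exact Real.sqrt_sq (div_pos (pow_pos (hfpos x z) 3) (pow_pos (hupos x) 2)).le
  have key : ∀ x z : ℝ,
      (gaussCurv (fun x z => (f x z) ^ 4 / (u x) ^ 2) (fun x z => (f x z) ^ 2 / (u x) ^ 2)
          x z = κ ↔
        2 * deriv (deriv (f x)) z
          - deriv (deriv fun x' => (f x' z)⁻¹) x
          - deriv (fun x' => deriv (fun x'' => Real.log (u x'')) x' / f x' z) x
        = -κ * (f x z) ^ 3 / (u x) ^ 2) := by
    intro x z
    have hA := hfpos x z
    have hB := hupos x
    have hA' : f x z ≠ 0 := hA.ne'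
    have hB' : u x ≠ 0 := hB.ne'
    -- x-part of gaussCurv
    have hfun1 : (fun x' => deriv (fun x'' => f x'' z ^ 2 / u x'' ^ 2) x'
          / Real.sqrt (f x' z ^ 4 / u x' ^ 2 * (f x' z ^ 2 / u x' ^ 2)))
        = fun x' => 2 * p1 (x', z) / f x' z ^ 2 - 2 * deriv u x' / (u x' * f x' z) := by
      funext x'
      rw [(((hd1 x' z).fun_pow 2).fun_div ((hu1 x').fun_pow 2) (pow_ne_zero 2 (hupos x').ne')).deriv,
        hsq x' z]
      have h1 : f x' z ≠ 0 := (hfpos x' z).ne'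
      have h2 : u x' ≠ 0 := (hupos x').ne'
      field_simp
      ring
    have hx : HasDerivAt
        (fun x' => 2 * p1 (x', z) / f x' z ^ 2 - 2 * deriv u x' / (u x' * f x' z))
        ((2 * fderiv ℝ p1 (x, z) (1, 0) * f x z ^ 2
            - 2 * p1 (x, z) * (2 * f x z ^ 1 * p1 (x, z))) / (f x z ^ 2) ^ 2
          - (2 * deriv (deriv u) x * (u x * f x z)
            - 2 * deriv u x * (deriv u x * f x z + u x * p1 (x, z))) / (u x * f x z) ^ 2) x := by
      exact (((hd11 x z).const_mul 2).div ((hd1 x z).pow 2) (pow_ne_zero 2 hA')).sub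
        (((hu2 x).const_mul 2).div ((hu1 x).mul (hd1 x z)) (mul_ne_zero hB' hA'))
    -- z-part of gaussCurv
    have hfun2 : (fun z' => deriv (fun z'' => f x z'' ^ 4 / u x ^ 2) z'
          / Real.sqrt (f x z' ^ 4 / u x ^ 2 * (f x z' ^ 2 / u x ^ 2)))
        = fun z' => 4 * p2 (x, z') := by
      funext z'
      rw [(((hd2 x z').fun_pow 4).div_const (u x ^ 2)).deriv, hsq x z']
      have h1 : f x z' ≠ 0 := (hfpos x z').ne'
      field_simp
      ring
    have hz : deriv (fun z' => 4 * p2 (x, z')) z = 4 * fderiv ℝ p2 (x, z) (0, 1) :=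
      ((hd22 x z).const_mul 4).deriv
    -- PDE side rewrites
    have ha1 : deriv (f x) = fun z' => p2 (x, z') := by
      funext z'; exact (hd2 x z').deriv
    have ha2 : deriv (deriv (f x)) z = fderiv ℝ p2 (x, z) (0, 1) := by
      rw [ha1]; exact (hd22 x z).deriv
    have hb1 : (deriv fun x' => (f x' z)⁻¹) = fun x' => -(p1 (x', z)) / f x' z ^ 2 := by
      funext x'; exact ((hd1 x' z).inv (hfpos x' z).ne').deriv
    have hb2 : deriv (fun x' => -(p1 (x', z)) / f x' z ^ 2) x
        = -((fderiv ℝ p1 (x, z) (1, 0) * f x z ^ 2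
            - p1 (x, z) * (2 * f x z ^ 1 * p1 (x, z))) / (f x z ^ 2) ^ 2) := by
      have := (((hd11 x z).fun_div ((hd1 x z).fun_pow 2) (pow_ne_zero 2 hA')).neg).deriv
      simpa [neg_div] using this
    have hc1 : (fun x' => deriv (fun x'' => Real.log (u x'')) x' / f x' z)
        = fun x' => deriv u x' / u x' / f x' z := by
      funext x'
      rw [((hu1 x').log (hupos x').ne').deriv]
    have hc2 : deriv (fun x' => deriv u x' / u x' / f x' z) x
        = ((deriv (deriv u) x * u x - deriv u x * deriv u x) / u x ^ 2 * f x z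
            - deriv u x / u x * p1 (x, z)) / f x z ^ 2 :=
      (((hu2 x).div (hu1 x) hB').div (hd1 x z) hA').deriv
    simp only [gaussCurv]
    rw [hsq x z, hfun1, hx.deriv, hfun2, hz, ha2, hb1, hb2, hc1, hc2]
    have hid : -(1 / (2 * (f x z ^ 3 / u x ^ 2))) *
          ((2 * fderiv ℝ p1 (x, z) (1, 0) * f x z ^ 2
            - 2 * p1 (x, z) * (2 * f x z ^ 1 * p1 (x, z))) / (f x z ^ 2) ^ 2
          - (2 * deriv (deriv u) x * (u x * f x z)
            - 2 * deriv u x * (deriv u x * f x z + u x * p1 (x, z))) / (u x * f x z) ^ 2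
          + 4 * fderiv ℝ p2 (x, z) (0, 1))
        = -(u x ^ 2 / f x z ^ 3) *
          (2 * fderiv ℝ p2 (x, z) (0, 1)
            - -((fderiv ℝ p1 (x, z) (1, 0) * f x z ^ 2
              - p1 (x, z) * (2 * f x z ^ 1 * p1 (x, z))) / (f x z ^ 2) ^ 2)
            - ((deriv (deriv u) x * u x - deriv u x * deriv u x) / u x ^ 2 * f x z
              - deriv u x / u x * p1 (x, z)) / f x z ^ 2) := by
      field_simp
      ring
    rw [hid]
    exact aux_iff _ _ _ _ hA hB
  exact ⟨fun h p hp => (key p.1 p.2).mp (h p hp), fun h p hp => (key p.1 p.2).mpr (h p hp)⟩
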